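/- Let D(s) = ∑_{n=1}^∞ b(n)/n^s where b(1) = 1, b(n) = 0 for 2 ≤ n ≤ N, and |b(n)| ≤ τ(n)³ for all n. Then for s real with s ≥ 1 + 9·log log N / log N and N sufficiently large, |D(s) - 1| = O(1/log N), where the implied constant is absolute. -/

import Mathlib

open ArithmeticFunction Finset
open scoped ArithmeticFunction.zeta

lemma choose_cube (k : ℕ) : (k+1)^3 ≤ (k+7).choose 7 := by
  induction k with
  | zero => simp
  | succ k ih =>
    have h1 := Nat.choose_mul_factorial_mul_factorial (show 7 ≤ k+8 by omega)
    have h2 := Nat.choose_mul_factorial_mul_factorial (show 7 ≤ k+7 by omega)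
    have e1 : k + 8 - 7 = k + 1 := by omega
    have e2 : k + 7 - 7 = k := by omega
    rw [e1] at h1; rw [e2] at h2
    have hf : Nat.factorial (k+1) = (k+1) * Nat.factorial k := Nat.factorial_succ k
    have key : (k+1) * (k+8).choose 7 = (k+8) * (k+7).choose 7 := by
      have hpos : 0 < Nat.factorial 7 * Nat.factorial k :=
        Nat.mul_pos (Nat.factorial_pos 7) (Nat.factorial_pos k)
      apply Nat.eq_of_mul_eq_mul_right hpos
      calc (k+1) * (k+8).choose 7 * (Nat.factorial 7 * Nat.factorial k)
          = (k+8).choose 7 * Nat.factorial 7 * Nat.factorial (k+1) := by rw [hf]; ring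
        _ = Nat.factorial (k+8) := h1
        _ = (k+8) * Nat.factorial (k+7) := Nat.factorial_succ _
        _ = (k+8) * ((k+7).choose 7 * Nat.factorial 7 * Nat.factorial k) := by rw [h2]
        _ = (k+8) * (k+7).choose 7 * (Nat.factorial 7 * Nat.factorial k) := by ring
    have ha : (k+2)^3 * (k+1) ≤ (k+8) * (k+1)^3 := by
      have : (k+8) * (k+1)^3 = (k+2)^3*(k+1) + (k+1)*(4*k^2+5*k) := by ring
      omega
    have hb : (k+8) * (k+1)^3 ≤ (k+8) * (k+7).choose 7 := Nat.mul_le_mul_left _ ih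
    have h3 : (k+2)^3 * (k+1) ≤ (k+8).choose 7 * (k+1) := by
      calc (k+2)^3 * (k+1) ≤ (k+8) * (k+7).choose 7 := le_trans ha hb
        _ = (k+1) * (k+8).choose 7 := key.symm
        _ = (k+8).choose 7 * (k+1) := by ring
    have := Nat.le_of_mul_le_mul_right h3 (by omega : 0 < k+1)
    simpa [add_assoc] using this


lemma zeta_mul_apply_prime_pow (g : ArithmeticFunction ℕ) {p : ℕ} (hp : p.Prime) (k : ℕ) :
    (ζ * g) (p^k) = ∑ i ∈ range (k+1), g (p^i) := by
  rw [mul_apply]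
  rw [show ∑ x ∈ (p^k).divisorsAntidiagonal, ζ x.1 * g x.2
      = ∑ i ∈ (p^k).divisors, ζ i * g (p^k / i) from
    Nat.sum_divisorsAntidiagonal (fun d e => ζ d * g e)]
  rw [Nat.sum_divisors_prime_pow hp]
  rw [← Finset.sum_range_reflect]
  apply Finset.sum_congr rfl
  intro i hi
  rw [Finset.mem_range] at hi
  have e1 : k+1-1-i = k-i := by omega
  rw [e1, zeta_apply_ne (pow_ne_zero _ hp.pos.ne'), one_mul]
  congr 1
  rw [Nat.pow_div (Nat.sub_le _ _) hp.pos]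
  congr 1
  omega

lemma zeta_pow_prime_pow (m : ℕ) {p : ℕ} (hp : p.Prime) (k : ℕ) :
    ((ζ : ArithmeticFunction ℕ)^(m+1)) (p^k) = (k+m).choose m := by
  induction m generalizing k with
  | zero => simp [zeta_apply_ne (pow_ne_zero _ hp.pos.ne')]
  | succ m ih =>
    rw [pow_succ']
    rw [zeta_mul_apply_prime_pow _ hp]
    rw [Finset.sum_congr rfl (fun i _ => ih i)]
    have key := Nat.sum_Icc_choose (k+m) m
    rw [← Finset.Ico_add_one_right_eq_Icc, Finset.sum_Ico_eq_sum_range] at key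
    have e : k + m + 1 - m = k + 1 := by omega
    rw [e] at key
    rw [show k + (m+1) = k+m+1 by ring, ← key]
    exact Finset.sum_congr rfl fun i _ => by rw [add_comm]

lemma isMult_zeta_pow (m : ℕ) : IsMultiplicative ((ζ : ArithmeticFunction ℕ)^(m+1)) := by
  induction m with
  | zero => simpa using isMultiplicative_zeta
  | succ m ih => rw [pow_succ']; exact isMultiplicative_zeta.mul ih

lemma tau_cube_le (n : ℕ) (hn : n ≠ 0) :
    n.divisors.card ^ 3 ≤ ((ζ : ArithmeticFunction ℕ)^8) n := by
  have h8 : ((ζ : ArithmeticFunction ℕ)^8) n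
      = n.factorization.prod fun p k => ((ζ : ArithmeticFunction ℕ)^8) (p^k) :=
    (isMult_zeta_pow 7).multiplicative_factorization _ hn
  rw [h8, Nat.card_divisors hn]
  rw [Finsupp.prod]
  rw [Nat.support_factorization]
  rw [← Finset.prod_pow]
  apply Finset.prod_le_prod'
  intro p hp
  have hpp : p.Prime := Nat.prime_of_mem_primeFactors hp
  rw [show ((ζ : ArithmeticFunction ℕ)^8) = ((ζ : ArithmeticFunction ℕ)^(7+1)) from rfl,
    zeta_pow_prime_pow 7 hpp]
  exact choose_cube (n.factorization p)


noncomputable def w (sg : ℝ) (n : ℕ) : ENNReal := ENNReal.ofReal ((n:ℝ) ^ (-sg))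

lemma w_zero (sg : ℝ) (hsg : 0 < sg) : w sg 0 = 0 := by
  simp [w, Real.zero_rpow (by linarith : -sg ≠ 0)]

lemma w_mul (sg : ℝ) (hsg : 0 < sg) (d e : ℕ) : w sg (d*e) = w sg d * w sg e := by
  rcases Nat.eq_zero_or_pos d with hd | hd
  · simp [hd, w_zero sg hsg]
  rcases Nat.eq_zero_or_pos e with he | he
  · simp [he, w_zero sg hsg]
  unfold w
  rw [← ENNReal.ofReal_mul (by positivity)]
  congr 1
  push_cast
  rw [Real.mul_rpow (by positivity) (by positivity)]

lemma conv_le (sg : ℝ) (hsg : 0 < sg) (G : ℕ → ENNReal) :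
    ∑' n : ℕ, (∑ x ∈ n.divisorsAntidiagonal, G x.2) * w sg n
      ≤ (∑' n : ℕ, w sg n) * (∑' n : ℕ, G n * w sg n) := by
  have step1 : ∀ n : ℕ, (∑ x ∈ n.divisorsAntidiagonal, G x.2) * w sg n
      = ∑ x ∈ n.divisorsAntidiagonal, w sg x.1 * (G x.2 * w sg x.2) := by
    intro n
    rw [Finset.sum_mul]
    apply Finset.sum_congr rfl
    intro x hx
    rw [Nat.mem_divisorsAntidiagonal] at hx
    rw [← hx.1, w_mul sg hsg]
    ring
  calc ∑' n : ℕ, (∑ x ∈ n.divisorsAntidiagonal, G x.2) * w sg n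
      = ∑' n : ℕ, ∑ x ∈ n.divisorsAntidiagonal, w sg x.1 * (G x.2 * w sg x.2) := by
        exact tsum_congr step1
    _ ≤ ∑' x : ℕ × ℕ, w sg x.1 * (G x.2 * w sg x.2) := by
        set F : ℕ × ℕ → ENNReal := fun x => w sg x.1 * (G x.2 * w sg x.2) with hF
        calc ∑' n : ℕ, ∑ x ∈ n.divisorsAntidiagonal, F x
            = ∑' n : ℕ, ∑' x : ℕ × ℕ, (if x ∈ n.divisorsAntidiagonal then F x else 0) := by
              refine tsum_congr fun n => ?_
              rw [tsum_eq_sum (s := n.divisorsAntidiagonal)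
                (fun b hb => if_neg hb)]
              exact (Finset.sum_congr rfl fun x hx => (if_pos hx)).symm
          _ = ∑' x : ℕ × ℕ, ∑' n : ℕ, (if x ∈ n.divisorsAntidiagonal then F x else 0) :=
              ENNReal.tsum_comm
          _ ≤ ∑' x : ℕ × ℕ, F x := by
              apply ENNReal.tsum_le_tsum
              intro x
              have h : ∀ n : ℕ, (if x ∈ n.divisorsAntidiagonal then F x else 0)
                  ≤ if n = x.1 * x.2 then F x else 0 := by
                intro n
                by_cases hx : x ∈ n.divisorsAntidiagonal
                · rw [if_pos hx]
                  have := (Nat.mem_divisorsAntidiagonal).1 hx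
                  rw [if_pos this.1.symm]
                · rw [if_neg hx]
                  exact zero_le
              calc ∑' n : ℕ, (if x ∈ n.divisorsAntidiagonal then F x else 0)
                  ≤ ∑' n : ℕ, if n = x.1 * x.2 then F x else 0 := ENNReal.tsum_le_tsum h
                _ = F x := tsum_ite_eq _ _
    _ = (∑' n : ℕ, w sg n) * (∑' n : ℕ, G n * w sg n) := by
        rw [ENNReal.tsum_prod']
        simp_rw [ENNReal.tsum_mul_left]
        rw [ENNReal.tsum_mul_right]


lemma key_ineq (sg : ℝ) (hsg : 1 < sg) {a : ℝ} (ha : 1 ≤ a) :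
    (a+1)^(-sg) * (sg-1) ≤ a^(1-sg) - (a+1)^(1-sg) := by
  have ha0 : 0 < a := by linarith
  set b := a + 1 with hb
  have hb0 : 0 < b := by linarith
  have hab : 0 < a / b := by positivity
  have h1 : Real.log (a/b) ≤ a/b - 1 := Real.log_le_sub_one_of_pos hab
  have h2 : (1-sg)*Real.log (a/b) + 1 ≤ Real.exp ((1-sg)*Real.log (a/b)) :=
    Real.add_one_le_exp _
  have h3 : (a/b)^(1-sg) = Real.exp ((1-sg) * Real.log (a/b)) := by
    rw [Real.rpow_def_of_pos hab, mul_comm]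
  have h4 : a^(1-sg) = b^(1-sg) * (a/b)^(1-sg) := by
    rw [Real.div_rpow ha0.le hb0.le]
    field_simp
  have h5 : b^(1-sg) = b^(-sg) * b := by
    rw [show (1-sg) = -sg + 1 by ring, Real.rpow_add hb0, Real.rpow_one]
  have h7 : (0:ℝ) < b^(1-sg) := Real.rpow_pos_of_pos hb0 _
  have step1 : a^(1-sg) - b^(1-sg) ≥ b^(1-sg) * ((1-sg)*Real.log (a/b)) := by
    rw [h4]
    have := mul_le_mul_of_nonneg_left h2 h7.le
    nlinarith [this, h3]
  have step2 : b^(1-sg) * ((1-sg)*Real.log (a/b)) ≥ b^(1-sg) * ((sg-1)*(1 - a/b)) := by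
    apply mul_le_mul_of_nonneg_left _ h7.le
    nlinarith [h1]
  have step3 : b^(1-sg) * ((sg-1)*(1 - a/b)) = b^(-sg) * (sg-1) := by
    rw [h5]
    have : (1 - a/b) = 1/b := by
      rw [hb]; field_simp; ring
    rw [this]
    field_simp
  linarith [step1, step2, step3.symm.le]

lemma partial_sum_le (sg : ℝ) (hsg : 1 < sg) (M : ℕ) :
    ∑ n ∈ range (M+2), ((n:ℝ))^(-sg) ≤ 1 + 1/(sg-1) := by
  have hpos : (0:ℝ) < sg - 1 := by linarith
  have claim : ∀ M : ℕ, ∑ n ∈ range (M+2), ((n:ℝ))^(-sg)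
      ≤ 1 + (1 - ((M+1:ℕ):ℝ)^(1-sg))/(sg-1) := by
    intro M
    induction M with
    | zero =>
      rw [show (0:ℕ)+2 = 2 by rfl, Finset.sum_range_succ, Finset.sum_range_one]
      rw [Nat.cast_zero, Real.zero_rpow (by linarith : -sg ≠ 0), Nat.cast_one, Real.one_rpow]
      rw [Real.one_rpow]
      simp
    | succ M ih =>
      rw [Finset.sum_range_succ]
      have hM1 : (1:ℝ) ≤ ((M+1:ℕ):ℝ) := by push_cast; linarith
      have key := key_ineq sg hsg hM1
      have hterm : ((M+1+1:ℕ):ℝ)^(-sg)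
          ≤ (((M+1:ℕ):ℝ)^(1-sg) - (((M+1:ℕ):ℝ)+1)^(1-sg))/(sg-1) := by
        rw [le_div_iff₀ hpos]
        have cast1 : ((M+1+1:ℕ):ℝ) = ((M+1:ℕ):ℝ) + 1 := by push_cast; ring
        rw [cast1]
        exact key
      have combine : 1 + (1 - ((M+1:ℕ):ℝ)^(1-sg))/(sg-1)
          + (((M+1:ℕ):ℝ)^(1-sg) - (((M+1:ℕ):ℝ)+1)^(1-sg))/(sg-1)
          = 1 + (1 - (((M+1:ℕ):ℝ)+1)^(1-sg))/(sg-1) := by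
        field_simp
        ring
      have cast2 : ((M+1+1:ℕ):ℝ) = ((M+1:ℕ):ℝ) + 1 := by push_cast; ring
      calc ∑ n ∈ range (M+2), ((n:ℝ))^(-sg) + ((M+2:ℕ):ℝ)^(-sg)
          ≤ (1 + (1 - ((M+1:ℕ):ℝ)^(1-sg))/(sg-1))
            + (((M+1:ℕ):ℝ)^(1-sg) - (((M+1:ℕ):ℝ)+1)^(1-sg))/(sg-1) := by
            exact add_le_add ih hterm
        _ = 1 + (1 - (((M+1:ℕ):ℝ)+1)^(1-sg))/(sg-1) := combine
        _ = 1 + (1 - ((M+1+1:ℕ):ℝ)^(1-sg))/(sg-1) := by rw [cast2]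
  refine (claim M).trans ?_
  have ht : (0:ℝ) ≤ ((M+1:ℕ):ℝ)^(1-sg) := Real.rpow_nonneg (by positivity) _
  gcongr
  linarith



lemma zsum_le (sg : ℝ) (hsg : 1 < sg)
    (hps : ∀ M : ℕ, ∑ n ∈ range (M+2), ((n:ℝ))^(-sg) ≤ 1 + 1/(sg-1)) :
    ∑' n : ℕ, w sg n ≤ ENNReal.ofReal (1 + 1/(sg-1)) := by
  rw [ENNReal.tsum_eq_iSup_sum]
  apply iSup_le
  intro s
  set M := s.sup _root_.id with hM
  have hsub : s ⊆ range (M+2) := by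
    intro n hn
    rw [Finset.mem_range]
    have : n ≤ M := Finset.le_sup (f := _root_.id) hn
    omega
  calc ∑ n ∈ s, w sg n ≤ ∑ n ∈ range (M+2), w sg n :=
        Finset.sum_le_sum_of_subset hsub
    _ = ENNReal.ofReal (∑ n ∈ range (M+2), ((n:ℝ))^(-sg)) := by
        rw [ENNReal.ofReal_sum_of_nonneg fun n _ => Real.rpow_nonneg (Nat.cast_nonneg n) _]
        rfl
    _ ≤ ENNReal.ofReal (1 + 1/(sg-1)) := ENNReal.ofReal_le_ofReal (hps M)


lemma zeta_pow_tsum_le (sg : ℝ) (hsg : 0 < sg) (m : ℕ) :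
    ∑' n : ℕ, (((ζ : ArithmeticFunction ℕ)^(m+1)) n : ENNReal) * w sg n
      ≤ (∑' n : ℕ, w sg n)^(m+1) := by
  induction m with
  | zero =>
    rw [pow_one, pow_one]
    apply le_of_eq
    apply tsum_congr
    intro n
    rcases Nat.eq_zero_or_pos n with h | h
    · simp [h, w_zero sg hsg]
    · rw [zeta_apply_ne h.ne']
      simp
  | succ m ih =>
    have hconv : ∀ n : ℕ, (((ζ : ArithmeticFunction ℕ)^(m+2)) n : ENNReal)
        = ∑ x ∈ n.divisorsAntidiagonal, (((ζ : ArithmeticFunction ℕ)^(m+1)) x.2 : ENNReal) := by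
      intro n
      rw [pow_succ', mul_apply]
      push_cast
      apply Finset.sum_congr rfl
      intro x hx
      rw [Nat.mem_divisorsAntidiagonal] at hx
      have hx1 : x.1 ≠ 0 := by
        intro h0
        exact hx.2 (by rw [← hx.1, h0, zero_mul])
      rw [zeta_apply_ne hx1]
      push_cast
      ring
    calc ∑' n : ℕ, (((ζ : ArithmeticFunction ℕ)^(m+1+1)) n : ENNReal) * w sg n
        = ∑' n : ℕ, (∑ x ∈ n.divisorsAntidiagonal,
            (((ζ : ArithmeticFunction ℕ)^(m+1)) x.2 : ENNReal)) * w sg n := by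
          exact tsum_congr fun n => by rw [show m+1+1 = m+2 from rfl, hconv n]
      _ ≤ (∑' n : ℕ, w sg n) * (∑' n : ℕ, (((ζ : ArithmeticFunction ℕ)^(m+1)) n : ENNReal) * w sg n) :=
          conv_le sg hsg _
      _ ≤ (∑' n : ℕ, w sg n) * (∑' n : ℕ, w sg n)^(m+1) := by
          exact mul_le_mul_right ih _
      _ = (∑' n : ℕ, w sg n)^(m+1+1) := by rw [← pow_succ']

lemma tail_bound (N : ℕ) (hN : Real.exp (Real.exp 9) ≤ (N:ℝ)) (s : ℝ)
    (hs : 1 + 9 * Real.log (Real.log N) / Real.log N ≤ s) :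
    Summable (fun n : ℕ => if n ≤ N then (0:ℝ) else (n.divisors.card:ℝ)^3 * (n:ℝ)^(-s)) ∧
    ∑' n : ℕ, (if n ≤ N then (0:ℝ) else (n.divisors.card:ℝ)^3 * (n:ℝ)^(-s))
      ≤ Real.exp 9 / Real.log N := by
  set u : ℕ → ℝ := fun n => if n ≤ N then (0:ℝ) else (n.divisors.card:ℝ)^3 * (n:ℝ)^(-s) with hu
  have he9 : (10:ℝ) ≤ Real.exp 9 := by
    have := Real.add_one_le_exp (9:ℝ); linarith
  have hN1 : (1:ℝ) < (N:ℝ) := by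
    have h1 := Real.add_one_le_exp (Real.exp 9)
    linarith [Real.exp_pos 9]
  have hN0 : (0:ℝ) < N := by linarith
  set L := Real.log N with hLdef
  have hL : Real.exp 9 ≤ L := (Real.le_log_iff_exp_le hN0).2 hN
  have hL0 : (0:ℝ) < L := by linarith
  have hL1 : (1:ℝ) < L := by linarith
  set L' := Real.log L with hL'def
  have hL' : (9:ℝ) ≤ L' := by
    have := (Real.le_log_iff_exp_le hL0).2 hL
    exact this
  set sg := 1 + 9/L with hsgdef
  have hsg1 : 1 < sg := by
    have : (0:ℝ) < 9/L := by positivity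
    simp [hsgdef]; linarith
  have hsg0 : 0 < sg := by linarith
  set d1 := (9*L' - 9)/L with hd1def
  have hd10 : 0 ≤ d1 := by
    apply div_nonneg _ hL0.le; linarith
  have hsum_id : d1 + sg = 1 + 9*L'/L := by
    rw [hd1def, hsgdef]; field_simp; ring
  have hs' : 1 + 9*L'/L ≤ s := hs
  have unn : ∀ n, 0 ≤ u n := by
    intro n
    rw [hu]
    dsimp only
    split
    · exact le_refl 0
    · positivity
  -- key per-term bound
  have key : ∀ n : ℕ, ENNReal.ofReal (u n)
      ≤ ENNReal.ofReal ((N:ℝ)^(-d1)) * ((((ζ : ArithmeticFunction ℕ)^8) n : ENNReal) * w sg n) := by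
    intro n
    rw [hu]
    dsimp only
    split
    · simp
    · rename_i hn
      push_neg at hn
      have hNn : (N:ℝ) ≤ (n:ℝ) := by exact_mod_cast hn.le
      have hn1 : (1:ℝ) ≤ (n:ℝ) := by linarith
      have hnpos : (0:ℝ) < (n:ℝ) := by linarith
      have hn0 : n ≠ 0 := by
        intro h; rw [h] at hn; omega
      have r1 : (n:ℝ)^(-s) ≤ (n:ℝ)^(-(1+9*L'/L)) :=
        Real.rpow_le_rpow_of_exponent_le hn1 (by linarith)
      have r2 : (n:ℝ)^(-(1+9*L'/L)) = (n:ℝ)^(-d1) * (n:ℝ)^(-sg) := by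
        rw [← Real.rpow_add hnpos]
        congr 1
        linarith [hsum_id]
      have r3 : (n:ℝ)^(-d1) ≤ (N:ℝ)^(-d1) := by
        rw [Real.rpow_neg (Nat.cast_nonneg n), Real.rpow_neg (Nat.cast_nonneg N)]
        exact inv_anti₀ (Real.rpow_pos_of_pos hN0 _) (Real.rpow_le_rpow hN0.le hNn hd10)
      have chain : (n.divisors.card:ℝ)^3 * (n:ℝ)^(-s)
          ≤ (N:ℝ)^(-d1) * ((n.divisors.card:ℝ)^3 * (n:ℝ)^(-sg)) := by
        have t1 : (n.divisors.card:ℝ)^3 * (n:ℝ)^(-s)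
            ≤ (n.divisors.card:ℝ)^3 * ((n:ℝ)^(-d1) * (n:ℝ)^(-sg)) := by
          rw [← r2]
          exact mul_le_mul_of_nonneg_left r1 (by positivity)
        have t2 : (n.divisors.card:ℝ)^3 * ((n:ℝ)^(-d1) * (n:ℝ)^(-sg))
            ≤ (n.divisors.card:ℝ)^3 * ((N:ℝ)^(-d1) * (n:ℝ)^(-sg)) := by
          apply mul_le_mul_of_nonneg_left _ (by positivity)
          exact mul_le_mul_of_nonneg_right r3 (Real.rpow_nonneg (Nat.cast_nonneg n) _)
        calc (n.divisors.card:ℝ)^3 * (n:ℝ)^(-s)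
            ≤ (n.divisors.card:ℝ)^3 * ((N:ℝ)^(-d1) * (n:ℝ)^(-sg)) := le_trans t1 t2
          _ = (N:ℝ)^(-d1) * ((n.divisors.card:ℝ)^3 * (n:ℝ)^(-sg)) := by ring
      calc ENNReal.ofReal ((n.divisors.card:ℝ)^3 * (n:ℝ)^(-s))
          ≤ ENNReal.ofReal ((N:ℝ)^(-d1) * ((n.divisors.card:ℝ)^3 * (n:ℝ)^(-sg))) :=
            ENNReal.ofReal_le_ofReal chain
        _ = ENNReal.ofReal ((N:ℝ)^(-d1)) * ENNReal.ofReal ((n.divisors.card:ℝ)^3 * (n:ℝ)^(-sg)) :=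
            ENNReal.ofReal_mul (Real.rpow_nonneg hN0.le _)
        _ = ENNReal.ofReal ((N:ℝ)^(-d1)) * (((n.divisors.card^3 : ℕ) : ENNReal) * w sg n) := by
            congr 1
            rw [show ((n.divisors.card:ℝ))^3 = ((n.divisors.card^3 : ℕ) : ℝ) by push_cast; ring]
            rw [ENNReal.ofReal_mul (Nat.cast_nonneg _)]
            rw [ENNReal.ofReal_natCast]
            rfl
        _ ≤ ENNReal.ofReal ((N:ℝ)^(-d1)) * ((((ζ : ArithmeticFunction ℕ)^8) n : ENNReal) * w sg n) := by
            apply mul_le_mul_right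
            apply mul_le_mul_left
            exact_mod_cast Nat.cast_le.2 (tau_cube_le n hn0)
  -- numeric bound
  have hsgm1 : sg - 1 = 9/L := by rw [hsgdef]; ring
  have hinv : 1/(sg-1) = L/9 := by rw [hsgm1]; field_simp
  have hA : (N:ℝ)^(-d1) = Real.exp 9 / L^9 := by
    rw [Real.rpow_def_of_pos hN0, ← hLdef]
    have e1 : L * (-d1) = 9 - 9*L' := by
      rw [hd1def]; field_simp; ring
    rw [e1, Real.exp_sub]
    congr 1
    rw [show (9:ℝ)*L' = ((9:ℕ):ℝ)*L' by norm_num, Real.exp_nat_mul, Real.exp_log hL0]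
  have hB : (1 + 1/(sg-1))^8 ≤ L^8 := by
    rw [hinv]
    apply pow_le_pow_left₀ (by positivity)
    linarith
  have nm : (N:ℝ)^(-d1) * (1 + 1/(sg-1))^8 ≤ Real.exp 9 / L := by
    rw [hA]
    calc Real.exp 9 / L^9 * (1 + 1/(sg-1))^8 ≤ Real.exp 9 / L^9 * L^8 := by
          exact mul_le_mul_of_nonneg_left hB (by positivity)
      _ = Real.exp 9 / L := by
          field_simp
  -- assemble ENNReal bound
  have big : ∑' n : ℕ, ENNReal.ofReal (u n) ≤ ENNReal.ofReal (Real.exp 9 / L) := by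
    calc ∑' n : ℕ, ENNReal.ofReal (u n)
        ≤ ∑' n : ℕ, ENNReal.ofReal ((N:ℝ)^(-d1)) * ((((ζ : ArithmeticFunction ℕ)^8) n : ENNReal) * w sg n) :=
          ENNReal.tsum_le_tsum key
      _ = ENNReal.ofReal ((N:ℝ)^(-d1)) * ∑' n : ℕ, ((((ζ : ArithmeticFunction ℕ)^8) n : ENNReal) * w sg n) :=
          ENNReal.tsum_mul_left
      _ ≤ ENNReal.ofReal ((N:ℝ)^(-d1)) * (∑' n : ℕ, w sg n)^8 := by
          apply mul_le_mul_right
          exact zeta_pow_tsum_le sg hsg0 7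
      _ ≤ ENNReal.ofReal ((N:ℝ)^(-d1)) * (ENNReal.ofReal (1 + 1/(sg-1)))^8 := by
          apply mul_le_mul_right
          exact pow_le_pow_left' (zsum_le sg hsg1 (partial_sum_le sg hsg1)) 8
      _ = ENNReal.ofReal ((N:ℝ)^(-d1) * (1 + 1/(sg-1))^8) := by
          rw [← ENNReal.ofReal_pow (by rw [hinv]; positivity), ← ENNReal.ofReal_mul (Real.rpow_nonneg hN0.le _)]
      _ ≤ ENNReal.ofReal (Real.exp 9 / L) := ENNReal.ofReal_le_ofReal nm
  have hne : ∑' n : ℕ, ENNReal.ofReal (u n) ≠ ⊤ :=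
    ne_top_of_le_ne_top ENNReal.ofReal_ne_top big
  have hsumu : Summable u := by
    have h := ENNReal.summable_toReal hne
    have : (fun n => (ENNReal.ofReal (u n)).toReal) = u := by
      funext n; exact ENNReal.toReal_ofReal (unn n)
    rwa [this] at h
  refine ⟨hsumu, ?_⟩
  have heq := ENNReal.ofReal_tsum_of_nonneg unn hsumu
  rw [← heq] at big
  exact (ENNReal.ofReal_le_ofReal_iff (div_nonneg (Real.exp_pos 9).le hL0.le)).1 big

theorem dirichlet_tail_bound :
    ∃ C N₀ : ℝ, 0 < C ∧ ∀ N : ℕ, N₀ ≤ (N : ℝ) → ∀ b : ℕ → ℝ,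
      b 1 = 1 →
      (∀ n : ℕ, 2 ≤ n → n ≤ N → b n = 0) →
      (∀ n : ℕ, 1 ≤ n → |b n| ≤ ((n.divisors.card : ℝ)) ^ 3) →
      ∀ s : ℝ, 1 + 9 * Real.log (Real.log N) / Real.log N ≤ s →
        |(∑' n : ℕ+, b (n : ℕ) / ((n : ℕ) : ℝ) ^ s) - 1| ≤ C / Real.log N := by
  refine ⟨Real.exp 9, Real.exp (Real.exp 9), Real.exp_pos 9, ?_⟩
  intro N hN b hb1 hb2 hb3 s hs
  obtain ⟨hsumu, htsumu⟩ := tail_bound N hN s hs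
  set u : ℕ → ℝ := fun n => if n ≤ N then (0:ℝ) else (n.divisors.card:ℝ)^3 * (n:ℝ)^(-s) with hu
  have hN1 : 1 ≤ N := by
    have h1 := Real.add_one_le_exp (Real.exp 9)
    have h2 : (1:ℝ) < (N:ℝ) := by linarith [Real.exp_pos 9]
    exact_mod_cast Nat.one_le_cast.mpr (by exact_mod_cast h2.le)
  have hL0 : 0 < Real.log N := by
    have h1 := Real.add_one_le_exp (Real.exp 9)
    have h2 : (1:ℝ) < (N:ℝ) := by linarith [Real.exp_pos 9]
    exact Real.log_pos h2
  set g : ℕ+ → ℝ := fun n => if (n:ℕ) ≤ N then 0 else b (n:ℕ) / ((n:ℕ):ℝ)^s with hg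
  set e : ℕ+ → ℝ := fun n => if n = 1 then 1 else 0 with he
  have hsplit : ∀ n : ℕ+, b (n:ℕ) / ((n:ℕ):ℝ)^s = e n + g n := by
    intro n
    by_cases h1 : n = 1
    · subst h1
      have : ((1:ℕ+):ℕ) = 1 := rfl
      simp only [hg, he, this, if_pos rfl, if_pos hN1, hb1]
      rw [Nat.cast_one, Real.one_rpow]
      norm_num
    · have hn1 : (n:ℕ) ≠ 1 := fun h => h1 (PNat.coe_eq_one_iff.mp h)
      have hge2 : 2 ≤ (n:ℕ) := by
        have := n.pos
        omega
      by_cases h2 : (n:ℕ) ≤ N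
      · simp only [hg, he, if_pos h2, if_neg h1, hb2 (n:ℕ) hge2 h2]
        norm_num
      · simp only [hg, he, if_neg h2, if_neg h1]
        ring
  have habs : ∀ n : ℕ+, ‖g n‖ ≤ u (n:ℕ) := by
    intro n
    simp only [hg, hu]
    by_cases h2 : (n:ℕ) ≤ N
    · simp [h2]
    · rw [if_neg h2, if_neg h2]
      have hnp : (0:ℝ) < ((n:ℕ):ℝ) := by exact_mod_cast n.pos
      have hp : (0:ℝ) < ((n:ℕ):ℝ)^s := Real.rpow_pos_of_pos hnp _
      rw [Real.norm_eq_abs, abs_div, abs_of_pos hp]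
      rw [Real.rpow_neg hnp.le, ← div_eq_mul_inv]
      apply div_le_div_of_nonneg_right (hb3 (n:ℕ) n.pos) hp.le
  have hsub : Summable (fun n : ℕ+ => u (n:ℕ)) := hsumu.subtype {n : ℕ | 0 < n}
  have hgsum : Summable g := Summable.of_norm_bounded hsub habs
  have hgnormsum : Summable (fun n : ℕ+ => ‖g n‖) :=
    Summable.of_nonneg_of_le (fun n => norm_nonneg _) habs hsub
  have hesum : Summable e := by
    apply summable_of_ne_finset_zero (s := {1})
    intro n hn
    simp only [he]
    rw [if_neg]
    simpa using hn
  have htsum_e : ∑' n : ℕ+, e n = 1 := by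
    simp only [he]
    exact tsum_ite_eq 1 1
  have hueq : ∑' n : ℕ+, u (n:ℕ) = ∑' n : ℕ, u n := by
    apply tsum_subtype_eq_of_support_subset
    intro x hx
    rcases Nat.eq_zero_or_pos x with rfl | hxpos
    · exact absurd (by simp [hu] : u 0 = 0) hx
    · exact hxpos
  have key : |∑' n : ℕ+, g n| ≤ Real.exp 9 / Real.log N := by
    calc |∑' n : ℕ+, g n| ≤ ∑' n : ℕ+, ‖g n‖ := by
          rw [← Real.norm_eq_abs]
          exact norm_tsum_le_tsum_norm hgnormsum
      _ ≤ ∑' n : ℕ+, u (n:ℕ) := Summable.tsum_le_tsum habs hgnormsum hsub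
      _ = ∑' n : ℕ, u n := hueq
      _ ≤ Real.exp 9 / Real.log N := htsumu
  have hfun : (∑' n : ℕ+, b (n:ℕ) / ((n:ℕ):ℝ)^s) = ∑' n : ℕ+, (e n + g n) :=
    tsum_congr hsplit
  rw [hfun, Summable.tsum_add hesum hgsum, htsum_e]
  simpa using key
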